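/- Let n ≥ 2 and let σ be a symmetric trilinear form on ℝⁿ with components σ₁₁₁ = (n−1)/√n, σ₁ⱼⱼ = −1/√n for 2 ≤ j ≤ n, and all other components (up to symmetry) zero. Then the maximum of σ(X,X,X) over unit vectors X ∈ ℝⁿ equals (n−1)/√n. -/

import Mathlib

open Finset Real

/-- The cubic form of the Calabi torus in an adapted orthonormal frame:
`σ 0 0 0 = (n-1)/√n`, `σ 0 j j = -1/√n` (up to symmetry) for `j.val ≠ 0`,
all other components zero. -/
noncomputable def calabiSigma (n : ℕ) (i j k : Fin n) : ℝ :=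
  if i.val = 0 ∧ j.val = 0 ∧ k.val = 0 then ((n : ℝ) - 1) / Real.sqrt n
  else if i.val = 0 ∧ j = k ∧ j.val ≠ 0 then -1 / Real.sqrt n
  else if j.val = 0 ∧ i = k ∧ i.val ≠ 0 then -1 / Real.sqrt n
  else if k.val = 0 ∧ i = j ∧ i.val ≠ 0 then -1 / Real.sqrt n
  else 0

lemma ksum (n : ℕ) [NeZero n] (X : Fin n → ℝ) (i j : Fin n) :
    ∑ k, X k * calabiSigma n i j k =
      if i = 0 then (if j = 0 then X 0 * (((n:ℝ)-1)/Real.sqrt n) else X j * (-1/Real.sqrt n))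
      else (if j = 0 then X i * (-1/Real.sqrt n)
            else if i = j then X 0 * (-1/Real.sqrt n) else 0) := by
  by_cases hi : i = 0 <;> by_cases hj : j = 0
  · subst hi; subst hj
    simp only [if_pos rfl]
    rw [Finset.sum_eq_single_of_mem 0 (mem_univ _)]
    · simp [calabiSigma]
    · intro b _ hb
      have : b.val ≠ 0 := Fin.val_ne_zero_iff.mpr hb
      simp [calabiSigma, this, Fin.ext_iff]
  · subst hi
    have hjv : j.val ≠ 0 := Fin.val_ne_zero_iff.mpr hj
    simp only [if_pos rfl, if_neg hj]
    rw [Finset.sum_eq_single_of_mem j (mem_univ _)]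
    · simp [calabiSigma, hjv]
    · intro b _ hb
      simp [calabiSigma, hjv, hb.symm, Ne.symm hj]
  · subst hj
    have hiv : i.val ≠ 0 := Fin.val_ne_zero_iff.mpr hi
    simp only [if_neg hi, if_pos rfl]
    rw [Finset.sum_eq_single_of_mem i (mem_univ _)]
    · simp [calabiSigma, hiv]
    · intro b _ hb
      simp [calabiSigma, hiv, hb.symm, hi]
  · have hiv : i.val ≠ 0 := Fin.val_ne_zero_iff.mpr hi
    have hjv : j.val ≠ 0 := Fin.val_ne_zero_iff.mpr hj
    simp only [if_neg hi, if_neg hj]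
    by_cases hij : i = j
    · subst hij
      simp only [if_pos rfl]
      rw [Finset.sum_eq_single_of_mem 0 (mem_univ _)]
      · simp [calabiSigma, hiv]
      · intro b _ hb
        have : b.val ≠ 0 := Fin.val_ne_zero_iff.mpr hb
        simp [calabiSigma, hiv, this]
    · simp only [if_neg hij]
      apply Finset.sum_eq_zero
      intro k _
      simp [calabiSigma, hiv, hjv, hij]

lemma tripleSum (n : ℕ) [NeZero n] (X : Fin n → ℝ) :
    ∑ i : Fin n, ∑ j : Fin n, ∑ k : Fin n, X i * X j * X k * calabiSigma n i j k
    = ((X 0)^3 * ((n:ℝ)-1) - 3 * X 0 * (∑ j ∈ (univ : Finset (Fin n)).erase 0, (X j)^2))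
        / Real.sqrt n := by
  have hT : ∑ i : Fin n, ∑ j : Fin n, ∑ k : Fin n, X i * X j * X k * calabiSigma n i j k
      = ∑ i : Fin n, ∑ j : Fin n, X i * X j * ∑ k, X k * calabiSigma n i j k := by
    refine Finset.sum_congr rfl (fun i _ => Finset.sum_congr rfl (fun j _ => ?_))
    rw [Finset.mul_sum]
    exact Finset.sum_congr rfl (fun k _ => by ring)
  rw [hT]
  rw [← Finset.add_sum_erase _ _ (mem_univ (0 : Fin n))]
  have h0 : ∑ j : Fin n, X 0 * X j * ∑ k, X k * calabiSigma n 0 j k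
      = X 0 * X 0 * (X 0 * (((n:ℝ)-1)/Real.sqrt n))
        + ∑ j ∈ (univ : Finset (Fin n)).erase 0, X 0 * X j * (X j * (-1/Real.sqrt n)) := by
    rw [← Finset.add_sum_erase _ _ (mem_univ (0 : Fin n))]
    congr 1
    · rw [ksum]; simp
    · refine Finset.sum_congr rfl (fun j hj => ?_)
      have hj0 : j ≠ 0 := (Finset.mem_erase.mp hj).1
      rw [ksum]; simp [hj0]
  have h1 : ∀ i ∈ (univ : Finset (Fin n)).erase 0,
      ∑ j : Fin n, X i * X j * ∑ k, X k * calabiSigma n i j k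
      = X i * X 0 * (X i * (-1/Real.sqrt n)) + X i * X i * (X 0 * (-1/Real.sqrt n)) := by
    intro i hi
    have hi0 : i ≠ 0 := (Finset.mem_erase.mp hi).1
    rw [← Finset.add_sum_erase _ _ (mem_univ (0 : Fin n))]
    congr 1
    · rw [ksum]; simp [hi0]
    · rw [Finset.sum_eq_single_of_mem i (Finset.mem_erase.mpr ⟨hi0, mem_univ _⟩)]
      · rw [ksum]; simp [hi0]
      · intro b hb hbi
        have hb0 : b ≠ 0 := (Finset.mem_erase.mp hb).1
        rw [ksum, if_neg hi0, if_neg hb0, if_neg (show ¬ i = b from fun h => hbi h.symm)]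
        ring
  rw [h0, Finset.sum_congr rfl h1]
  have hM : ∑ j ∈ (univ : Finset (Fin n)).erase 0, X 0 * X j * (X j * (-1/Real.sqrt n))
      = -(X 0) * (∑ j ∈ (univ : Finset (Fin n)).erase 0, (X j)^2) / Real.sqrt n := by
    rw [Finset.mul_sum, Finset.sum_div]
    exact Finset.sum_congr rfl (fun j _ => by ring)
  have hQ : ∑ i ∈ (univ : Finset (Fin n)).erase 0,
      (X i * X 0 * (X i * (-1/Real.sqrt n)) + X i * X i * (X 0 * (-1/Real.sqrt n)))
      = -2 * X 0 * (∑ j ∈ (univ : Finset (Fin n)).erase 0, (X j)^2) / Real.sqrt n := by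
    rw [Finset.mul_sum, Finset.sum_div]
    exact Finset.sum_congr rfl (fun j _ => by ring)
  rw [hM, hQ]
  ring

theorem stmt_12 (n : ℕ) (hn : 2 ≤ n) :
    IsGreatest {r : ℝ | ∃ X : Fin n → ℝ, ∑ i, (X i)^2 = 1 ∧
        r = ∑ i : Fin n, ∑ j : Fin n, ∑ k : Fin n,
          X i * X j * X k * calabiSigma n i j k}
      (((n : ℝ) - 1) / Real.sqrt n) := by
  haveI : NeZero n := ⟨by omega⟩
  have hs : 0 < Real.sqrt n := Real.sqrt_pos.mpr (by positivity)
  constructor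
  · refine ⟨fun i => if i = 0 then 1 else 0, ?_, ?_⟩
    · rw [Finset.sum_eq_single_of_mem 0 (mem_univ _)] <;> simp +contextual
    · rw [tripleSum]
      have : ∑ j ∈ (univ : Finset (Fin n)).erase 0,
          ((if j = (0:Fin n) then (1:ℝ) else 0))^2 = 0 := by
        apply Finset.sum_eq_zero
        intro j hj
        simp [(Finset.mem_erase.mp hj).1]
      rw [this]
      norm_num
  · rintro r ⟨X, hX, rfl⟩
    rw [tripleSum]
    rw [div_le_div_iff_of_pos_right hs]
    set t := X 0 with ht
    have hQ : ∑ j ∈ (univ : Finset (Fin n)).erase 0, (X j)^2 = 1 - t^2 := by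
      have := Finset.add_sum_erase _ (fun j => (X j)^2) (mem_univ (0 : Fin n))
      rw [hX] at this
      have h2 : (X 0)^2 + ∑ j ∈ (univ : Finset (Fin n)).erase 0, (X j)^2 = 1 := by
        simpa using this
      linarith
    rw [hQ]
    have ht2 : t^2 ≤ 1 := by
      nlinarith [Finset.sum_nonneg (fun j (_ : j ∈ (univ : Finset (Fin n)).erase 0) =>
        sq_nonneg (X j)), hQ]
    have ht1 : t ≤ 1 := by nlinarith
    have hquad : 0 ≤ ((n:ℝ)+2)*t^2 + ((n:ℝ)+2)*t + ((n:ℝ)-1) := by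
      have hn2 : (2:ℝ) ≤ n := by exact_mod_cast hn
      nlinarith [sq_nonneg (2*t+1)]
    nlinarith [mul_nonneg (sub_nonneg.2 ht1) hquad]
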